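/- Let 1 ≤ p < ∞, 1 ≤ q < ∞, and for each holomorphic f : B_{ℓ_q^n} → X with monomial coefficients x_α define the Bohr radius K as the supremum of r ≥ 0 such that sup_{z ∈ rB_{ℓ_q^n}} ∑_α ‖T(x_α)‖^p |z^α|^p ≤ λ ‖f‖^p for all such f. Then the arithmetic Bohr radius A_p(B_{ℓ_q^n}, T, λ), defined as the supremum of (1/n)∑ r_i over admissible nonnegative vectors r, satisfies A_p(B_{ℓ_q^n}, T, λ) ≥ K^p(B_{ℓ_q^n}, T, λ) / n^{1/q}. -/

import Mathlib

noncomputable section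

/-- The open unit ball of `ℓ_q^n` (complex `n`-space with the `q`-norm), `1 ≤ q < ∞`. -/
def ballq (q : ℝ) (n : ℕ) : Set (Fin n → ℂ) :=
  {z | (∑ j, ‖z j‖ ^ q) ^ (1 / q) < 1}

/-- The monomial `z^α`. -/
def mono {n : ℕ} (z : Fin n → ℂ) (α : Fin n → ℕ) : ℂ := ∏ j, z j ^ α j

/-- The coefficient family `a : α ↦ x_α` represents a bounded holomorphic function
`f(z) = ∑_α x_α z^α` on `B_{ℓ_q^n}` with values in `X`. -/
def IsHinf {X : Type*} [NormedAddCommGroup X] [NormedSpace ℂ X]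
    (q : ℝ) (n : ℕ) (a : (Fin n → ℕ) → X) : Prop :=
  (∀ z ∈ ballq q n, Summable fun α => mono z α • a α) ∧
    ∃ M : ℝ, ∀ z ∈ ballq q n, ‖∑' α, mono z α • a α‖ ≤ M

/-- The sup norm `‖f‖_{B_{ℓ_q^n}}` of the function represented by `a`. -/
def supnorm {X : Type*} [NormedAddCommGroup X] [NormedSpace ℂ X]
    (q : ℝ) (n : ℕ) (a : (Fin n → ℕ) → X) : ℝ :=
  sSup {y | ∃ z ∈ ballq q n, y = ‖∑' α, mono z α • a α‖}

/-- The `λ_p`-Bohr radius `K^p(B_{ℓ_q^n}, T, λ)`: the supremum of all `r ≥ 0` such that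
`sup_{z ∈ r B_{ℓ_q^n}} ∑_α ‖T x_α‖^p |z^α|^p ≤ λ ‖f‖^p` for every bounded holomorphic
`f = ∑ x_α z^α : B_{ℓ_q^n} → X`. -/
def KBohr {X Y : Type*} [NormedAddCommGroup X] [NormedSpace ℂ X]
    [NormedAddCommGroup Y] [NormedSpace ℂ Y]
    (q : ℝ) (n : ℕ) (p lam : ℝ) (T : X →L[ℂ] Y) : ℝ :=
  sSup {r : ℝ | 0 ≤ r ∧ ∀ a : (Fin n → ℕ) → X, IsHinf q n a → ∀ z ∈ ballq q n,
    ∑' α : Fin n → ℕ, ‖T (a α)‖ ^ p * (r ^ (∑ j, α j) * ‖mono z α‖) ^ p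
      ≤ lam * supnorm q n a ^ p}

/-- The `λ_p`-arithmetic Bohr radius `A_p(B_{ℓ_q^n}, T, λ)`: the supremum of
`(1/n)∑ r_i` over nonnegative `r ∈ ℝ^n` with
`∑_α ‖T x_α‖^p r^{pα} ≤ λ ‖f‖^p` for every bounded holomorphic `f = ∑ x_α z^α`. -/
def ABohr {X Y : Type*} [NormedAddCommGroup X] [NormedSpace ℂ X]
    [NormedAddCommGroup Y] [NormedSpace ℂ Y]
    (q : ℝ) (n : ℕ) (p lam : ℝ) (T : X →L[ℂ] Y) : ℝ :=
  sSup {t : ℝ | ∃ r : Fin n → ℝ, (∀ i, 0 ≤ r i) ∧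
    (∀ a : (Fin n → ℕ) → X, IsHinf q n a →
      ∑' α : Fin n → ℕ, ‖T (a α)‖ ^ p * (∏ j, r j ^ α j) ^ p ≤ lam * supnorm q n a ^ p) ∧
    t = (∑ i, r i) / n}


section Aux

variable {X Y : Type*} [NormedAddCommGroup X] [NormedSpace ℂ X]
    [NormedAddCommGroup Y] [NormedSpace ℂ Y]

lemma supnorm_nonneg' (q : ℝ) (n : ℕ) (a : (Fin n → ℕ) → X) : 0 ≤ supnorm q n a :=
  Real.sSup_nonneg (by rintro y ⟨z, hz, rfl⟩; positivity)

lemma coord_lt_one {q : ℝ} (hq : 1 ≤ q) {n : ℕ} {z : Fin n → ℂ}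
    (hz : z ∈ ballq q n) (i : Fin n) : ‖z i‖ < 1 := by
  have hq0 : 0 < q := lt_of_lt_of_le one_pos hq
  have hsum : (∑ j, ‖z j‖ ^ q) < 1 := by
    by_contra h
    push_neg at h
    have := Real.one_le_rpow h (by positivity : (0:ℝ) ≤ 1/q)
    simp only [ballq, Set.mem_setOf_eq] at hz
    linarith
  have h1 : ‖z i‖ ^ q ≤ ∑ j, ‖z j‖ ^ q :=
    Finset.single_le_sum (f := fun j => ‖z j‖ ^ q) (fun j _ => by positivity) (Finset.mem_univ i)
  by_contra h
  push_neg at h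
  have := Real.one_le_rpow h hq0.le
  linarith

lemma const_mem_ballq {q : ℝ} (hq : 1 ≤ q) {n : ℕ} (hn : 0 < n) {c : ℝ}
    (hc0 : 0 ≤ c) (hc : c < ((n : ℝ) ^ (1/q))⁻¹) :
    (fun _ : Fin n => (c : ℂ)) ∈ ballq q n := by
  have hq0 : 0 < q := lt_of_lt_of_le one_pos hq
  have hn0 : (0:ℝ) < n := by exact_mod_cast hn
  simp only [ballq, Set.mem_setOf_eq, Complex.norm_real, Real.norm_eq_abs, abs_of_nonneg hc0,
    Finset.sum_const, Finset.card_univ, Fintype.card_fin, nsmul_eq_mul]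
  have h1 : c ^ q < (((n : ℝ) ^ (1/q))⁻¹) ^ q := Real.rpow_lt_rpow hc0 hc hq0
  have h2 : (((n : ℝ) ^ (1/q))⁻¹) ^ q = ((n : ℝ))⁻¹ := by
    rw [Real.inv_rpow (Real.rpow_nonneg hn0.le _), one_div,
      Real.rpow_inv_rpow hn0.le hq0.ne']
  have h3 : (n : ℝ) * c ^ q < 1 := by
    rw [h2] at h1
    calc (n : ℝ) * c ^ q < (n : ℝ) * ((n:ℝ))⁻¹ := by
          exact mul_lt_mul_of_pos_left h1 hn0
      _ = 1 := mul_inv_cancel₀ hn0.ne'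
  exact Real.rpow_lt_one (by positivity) h3 (by positivity)

/-- norm of the monomial at a constant nonnegative real vector -/
lemma mono_const_norm {n : ℕ} {c : ℝ} (hc0 : 0 ≤ c) (α : Fin n → ℕ) :
    ‖mono (fun _ : Fin n => (c : ℂ)) α‖ = ∏ j, c ^ α j := by
  simp [mono, norm_prod, norm_pow, Complex.norm_real, abs_of_nonneg hc0]

end Aux

/-- Lemma 3.2: `A_p(B_{ℓ_q^n}, T, λ) ≥ K^p(B_{ℓ_q^n}, T, λ) / n^{1/q}`. -/
theorem stmt8 {X Y : Type*} [NormedAddCommGroup X] [NormedSpace ℂ X]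
    [NormedAddCommGroup Y] [NormedSpace ℂ Y]
    (p q lam : ℝ) (hp : 1 ≤ p) (hq : 1 ≤ q) (hlam : 1 ≤ lam)
    (n : ℕ) (hn : 0 < n) (T : X →L[ℂ] Y) :
    ABohr q n p lam T ≥ KBohr q n p lam T / (n : ℝ) ^ (1 / q) := by
  classical
  have hq0 : 0 < q := lt_of_lt_of_le one_pos hq
  have hp0 : 0 < p := lt_of_lt_of_le one_pos hp
  have hn0 : (0:ℝ) < n := by exact_mod_cast hn
  have hnq : (0:ℝ) < (n : ℝ) ^ (1/q) := Real.rpow_pos_of_pos hn0 _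
  set d : ℝ := ((n : ℝ) ^ (1/q))⁻¹ with hd
  have hd0 : 0 < d := inv_pos.mpr hnq
  set Aset : Set ℝ := {t : ℝ | ∃ r : Fin n → ℝ, (∀ i, 0 ≤ r i) ∧
    (∀ a : (Fin n → ℕ) → X, IsHinf q n a →
      ∑' α : Fin n → ℕ, ‖T (a α)‖ ^ p * (∏ j, r j ^ α j) ^ p ≤ lam * supnorm q n a ^ p) ∧
    t = (∑ i, r i) / n} with hAset
  set Kset : Set ℝ := {r : ℝ | 0 ≤ r ∧ ∀ a : (Fin n → ℕ) → X, IsHinf q n a → ∀ z ∈ ballq q n,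
    ∑' α : Fin n → ℕ, ‖T (a α)‖ ^ p * (r ^ (∑ j, α j) * ‖mono z α‖) ^ p
      ≤ lam * supnorm q n a ^ p} with hKset
  have hAB : ABohr q n p lam T = sSup Aset := rfl
  have hKB : KBohr q n p lam T = sSup Kset := rfl
  have hA0 : 0 ≤ sSup Aset := by
    apply Real.sSup_nonneg
    intro t ht
    obtain ⟨r, hr, -, rfl⟩ := ht
    exact div_nonneg (Finset.sum_nonneg fun i _ => hr i) hn0.le
  rw [hAB, hKB, ge_iff_le, div_le_iff₀ hnq]
  by_cases hT : T = 0
  · -- T = 0 : Kset is unbounded, sSup = 0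
    have hK : sSup Kset = 0 := by
      rw [csSup_of_not_bddAbove, Real.sSup_empty]
      rintro ⟨M, hM⟩
      have hmem : max M 0 + 1 ∈ Kset := by
        refine ⟨by positivity, fun a ha z hz => ?_⟩
        subst hT
        simp only [ContinuousLinearMap.zero_apply, norm_zero,
          Real.zero_rpow hp0.ne', zero_mul, tsum_zero]
        exact mul_nonneg (by linarith) (Real.rpow_nonneg (supnorm_nonneg' q n a) p)
      have := hM hmem
      have := le_max_left M 0
      linarith
    rw [hK]
    positivity
  · -- T ≠ 0 : pick x with T x ≠ 0
    obtain ⟨x, hx⟩ : ∃ x, T x ≠ 0 := by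
      by_contra h
      push_neg at h
      exact hT (ContinuousLinearMap.ext fun y => by simp [h y])
    have hTx : (0:ℝ) < ‖T x‖ := norm_pos_iff.mpr hx
    -- the coordinate functions show Aset is bounded above
    have hBdd : BddAbove Aset := by
      refine ⟨(lam * ‖x‖ ^ p / ‖T x‖ ^ p) ^ (1/p), ?_⟩
      rintro t ⟨r, hr, hcond, rfl⟩
      have hri : ∀ i : Fin n, r i ≤ (lam * ‖x‖ ^ p / ‖T x‖ ^ p) ^ (1/p) := by
        intro i
        set e : Fin n → ℕ := fun j => if j = i then 1 else 0 with he
        set a : (Fin n → ℕ) → X := fun α => if α = e then x else 0 with ha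
        have hmono : ∀ z : Fin n → ℂ, mono z e = z i := by
          intro z
          rw [mono]
          rw [Finset.prod_eq_single i (fun j _ hj => by simp [he, hj]) (by simp)]
          simp [he]
        have htsum : ∀ z : Fin n → ℂ, (∑' α, mono z α • a α) = z i • x := by
          intro z
          rw [tsum_eq_single e (fun α hα => by simp [ha, hα])]
          simp [ha, hmono]
        have hHinf : IsHinf q n a := by
          constructor
          · intro z hz
            apply summable_of_ne_finset_zero (s := {e})
            intro α hα
            simp only [Finset.mem_singleton] at hα
            simp [ha, hα]
          · refine ⟨‖x‖, fun z hz => ?_⟩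
            rw [htsum z]
            calc ‖z i • x‖ = ‖z i‖ * ‖x‖ := norm_smul _ _
              _ ≤ 1 * ‖x‖ := by
                  exact mul_le_mul_of_nonneg_right (coord_lt_one hq hz i).le (norm_nonneg x)
              _ = ‖x‖ := one_mul _
        have hsup : supnorm q n a ≤ ‖x‖ := by
          apply Real.sSup_le
          · rintro y ⟨z, hz, rfl⟩
            rw [htsum z]
            calc ‖z i • x‖ = ‖z i‖ * ‖x‖ := norm_smul _ _
              _ ≤ 1 * ‖x‖ :=
                  mul_le_mul_of_nonneg_right (coord_lt_one hq hz i).le (norm_nonneg x)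
              _ = ‖x‖ := one_mul _
          · exact norm_nonneg x
        have hle := hcond a hHinf
        rw [tsum_eq_single e (fun α hα => by
          simp [ha, hα, Real.zero_rpow hp0.ne'])] at hle
        have hprod : (∏ j, r j ^ e j) = r i := by
          rw [Finset.prod_eq_single i (fun j _ hj => by simp [he, hj]) (by simp)]
          simp [he]
        rw [hprod] at hle
        simp only [ha, if_pos rfl] at hle
        have hsup' : lam * supnorm q n a ^ p ≤ lam * ‖x‖ ^ p := by
          apply mul_le_mul_of_nonneg_left _ (by linarith : (0:ℝ) ≤ lam)
          exact Real.rpow_le_rpow (supnorm_nonneg' q n a) hsup hp0.le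
        have h1 : ‖T x‖ ^ p * r i ^ p ≤ lam * ‖x‖ ^ p := le_trans hle hsup'
        have h2 : r i ^ p ≤ lam * ‖x‖ ^ p / ‖T x‖ ^ p := by
          rw [le_div_iff₀ (Real.rpow_pos_of_pos hTx p)]
          linarith [h1]
        calc r i = (r i ^ p) ^ (1/p) := by
              rw [one_div, Real.rpow_rpow_inv (hr i) hp0.ne']
          _ ≤ (lam * ‖x‖ ^ p / ‖T x‖ ^ p) ^ (1/p) :=
              Real.rpow_le_rpow (Real.rpow_nonneg (hr i) p) h2 (by positivity)
      calc (∑ i, r i) / n ≤ (∑ i : Fin n, (lam * ‖x‖ ^ p / ‖T x‖ ^ p) ^ (1/p)) / n := by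
            gcongr with i _
            exact hri i
          _ = (lam * ‖x‖ ^ p / ‖T x‖ ^ p) ^ (1/p) := by
            rw [Finset.sum_const, Finset.card_univ, Fintype.card_fin, nsmul_eq_mul]
            field_simp
    rcases Set.eq_empty_or_nonempty Kset with hKe | hKne
    · rw [hKe, Real.sSup_empty]
      positivity
    · refine csSup_le hKne ?_
      rintro r ⟨hr0, hr⟩
      -- key: r * c ∈ Aset for 0 ≤ c < d
      have key : ∀ c : ℝ, 0 ≤ c → c < d → r * c ≤ sSup Aset := by
        intro c hc0 hc
        apply le_csSup hBdd
        refine ⟨fun _ => r * c, fun i => mul_nonneg hr0 hc0, ?_, ?_⟩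
        · intro a ha
          have hz := hr a ha (fun _ => (c : ℂ)) (const_mem_ballq hq hn hc0 hc)
          calc ∑' α : Fin n → ℕ, ‖T (a α)‖ ^ p * (∏ j, (r * c) ^ α j) ^ p
              = ∑' α : Fin n → ℕ, ‖T (a α)‖ ^ p *
                (r ^ (∑ j, α j) * ‖mono (fun _ : Fin n => (c:ℂ)) α‖) ^ p := by
                apply tsum_congr
                intro α
                congr 2
                rw [mono_const_norm hc0, ← Finset.prod_pow_eq_pow_sum,
                  ← Finset.prod_mul_distrib]
                exact Finset.prod_congr rfl fun j _ => mul_pow r c (α j)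
            _ ≤ lam * supnorm q n a ^ p := hz
        · rw [Finset.sum_const, Finset.card_univ, Fintype.card_fin, nsmul_eq_mul]
          field_simp
      -- conclude r ≤ sSup Aset * n^(1/q)
      by_contra hcon
      push_neg at hcon
      have hrpos : 0 < r := by nlinarith
      have hAd : sSup Aset < r * d := by
        have : sSup Aset = sSup Aset * (n:ℝ) ^ (1/q) * d := by
          rw [hd, mul_assoc, mul_inv_cancel₀ hnq.ne', mul_one]
        rw [this]
        exact mul_lt_mul_of_pos_right hcon hd0
      set c : ℝ := (sSup Aset + r * d) / (2 * r) with hc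
      have hc0 : 0 ≤ c := by
        apply div_nonneg _ (by linarith)
        nlinarith
      have hcd : c < d := by
        rw [hc, div_lt_iff₀ (by linarith : (0:ℝ) < 2 * r)]
        nlinarith
      have hrc : r * c = (sSup Aset + r * d) / 2 := by
        rw [hc]
        field_simp
      have := key c hc0 hcd
      rw [hrc] at this
      linarith

end
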